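/- Fix an integer e>1 and a charge (s_0,s_1)∈ℕ² with s_0 ≤ s_1. If λ=(λ^(0),λ^(1)) ∈ Φ_{e,n}^{(s_0,s_1)}, then for all i = 1, 2, 3, … one has λ^(0)_i ≥ λ^(1)_{i+s_1−s_0} (parts beyond the length of a partition are 0). -/

import Mathlib

open Finset

/-- A node `(a, b, c)`: row index `a ≥ 1`, column index `b ≥ 1`, component `c ∈ {0,1}`. -/
abbrev Node : Type := ℕ × ℕ × Fin 2

namespace UglovPaper

/-- Row index of a node. -/
def nrow (γ : Node) : ℕ := γ.1

/-- Column index of a node. -/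
def ncol (γ : Node) : ℕ := γ.2.1

/-- Component of a node. -/
def ncomp (γ : Node) : Fin 2 := γ.2.2

/-- A finite set of nodes is the Young diagram of a bipartition iff all indices are `≥ 1`
and the set is closed under moving left in a row and up in a column (in each component). -/
def IsDiagram (D : Finset Node) : Prop :=
  (∀ γ ∈ D, 1 ≤ nrow γ ∧ 1 ≤ ncol γ) ∧
  (∀ γ ∈ D, ∀ b' : ℕ, 1 ≤ b' → b' ≤ ncol γ → (nrow γ, b', ncomp γ) ∈ D) ∧
  (∀ γ ∈ D, 2 ≤ nrow γ → (nrow γ - 1, ncol γ, ncomp γ) ∈ D)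

/-- `part D c a` is the `a`-th part `λ^(c)_a` of the bipartition with diagram `D`. -/
def part (D : Finset Node) (c : Fin 2) (a : ℕ) : ℕ :=
  (D.filter (fun γ => nrow γ = a ∧ ncomp γ = c)).card

/-- The content `b - a + s_c` of a node `(a,b,c)` for the charge `s`. -/
def cont (s : Fin 2 → ℤ) (γ : Node) : ℤ := (ncol γ : ℤ) - (nrow γ : ℤ) + s (ncomp γ)

/-- The residue mod `e` of a node for the charge `s`. -/
def res (e : ℕ) (s : Fin 2 → ℤ) (γ : Node) : ZMod e := ((cont s γ : ℤ) : ZMod e)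

/-- The order `γ <_{(s₀,s₁)} γ'` on nodes. -/
def chargeLT (s : Fin 2 → ℤ) (γ γ' : Node) : Prop :=
  cont s γ < cont s γ' ∨ (cont s γ = cont s γ' ∧ ncomp γ' < ncomp γ)

/-- The positive asymptotic order `γ <_{(v₀,v₁)₊} γ'`. -/
def posLT (γ γ' : Node) : Prop :=
  ncomp γ' < ncomp γ ∨ (ncomp γ = ncomp γ' ∧ nrow γ' < nrow γ)

/-- The negative asymptotic order `γ <_{(v₀,v₁)₋} γ'`. -/
def negLT (γ γ' : Node) : Prop :=
  ncomp γ < ncomp γ' ∨ (ncomp γ = ncomp γ' ∧ nrow γ' < nrow γ)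

/-- `γ` is a removable node of the diagram `D`. -/
def Removable (D : Finset Node) (γ : Node) : Prop := γ ∈ D ∧ IsDiagram (D.erase γ)

/-- `γ` is an addable node of the diagram `D`. -/
def Addable (D : Finset Node) (γ : Node) : Prop := γ ∉ D ∧ IsDiagram (insert γ D)

/-- `γ` is a normal `i`-node of `D` with respect to the order `lt` and the residue map `r`:
it is a removable `i`-node, and for every `i`-node `η` above it, the number of addable
`i`-nodes in the interval `(γ, η]` does not exceed the number of removable `i`-nodes there.
This is equivalent to surviving the `RA`-deletion process. -/
def NormalNode {α : Type*} (D : Finset Node) (lt : Node → Node → Prop)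
    (r : Node → α) (i : α) (γ : Node) : Prop :=
  Removable D γ ∧ r γ = i ∧
  ∀ η : Node, r η = i → lt γ η →
    {x : Node | Addable D x ∧ r x = i ∧ lt γ x ∧ (lt x η ∨ x = η)}.ncard ≤
    {x : Node | Removable D x ∧ r x = i ∧ lt γ x ∧ (lt x η ∨ x = η)}.ncard

/-- `γ` is the good `i`-node of `D`: the minimal normal `i`-node for the order `lt`. -/
def GoodNode {α : Type*} (D : Finset Node) (lt : Node → Node → Prop)
    (r : Node → α) (i : α) (γ : Node) : Prop :=
  NormalNode D lt r i γ ∧ ∀ δ : Node, NormalNode D lt r i δ → δ = γ ∨ lt γ δ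

/-- The recursively defined class of bipartitions labelling the crystal:
the empty bipartition has rank `0`, and a bipartition of rank `n + 1` belongs iff
removing some good `i`-node yields a member of rank `n`. -/
inductive CrystalSet {α : Type*} (lt : Node → Node → Prop) (r : Node → α) :
    ℕ → Finset Node → Prop
  | empty : CrystalSet lt r 0 ∅
  | step {n : ℕ} {D : Finset Node} {γ : Node} (i : α) :
      IsDiagram D → GoodNode D lt r i γ →
      CrystalSet lt r n (D.erase γ) → CrystalSet lt r (n + 1) D

/-- The set `Φ_{e,n}^{(s₀,s₁)}` of Uglov bipartitions. -/
def UglovSet (e : ℕ) (s : Fin 2 → ℤ) : ℕ → Finset Node → Prop :=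
  CrystalSet (chargeLT s) (res e s)

/-- The set `Φ_{e,n}^{(v₀,v₁)₊}` of positive Kleshchev bipartitions. -/
def KleshchevPos (e : ℕ) (v : Fin 2 → ℤ) : ℕ → Finset Node → Prop :=
  CrystalSet posLT (res e v)

/-- The set `Φ_{e,n}^{(v₀,v₁)₋}` of negative Kleshchev bipartitions. -/
def KleshchevNeg (e : ℕ) (v : Fin 2 → ℤ) : ℕ → Finset Node → Prop :=
  CrystalSet negLT (res e v)

/-- Swapping the two components of a bipartition: `(λ⁽⁰⁾,λ⁽¹⁾) ↦ (λ⁽¹⁾,λ⁽⁰⁾)`. -/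
def swapDiagram (D : Finset Node) : Finset Node :=
  D.image (fun γ => (γ.1, γ.2.1, γ.2.2 + 1))

/-! ### Symbols -/

/-- `beta s m D c j` is the `j`-th entry `β^(c)_j = λ^(c)_j − j + s_c + m` of the
`s`-symbol of `D`, for `1 ≤ j ≤ m + s_c`. -/
def beta (s : Fin 2 → ℕ) (m : ℕ) (D : Finset Node) (c : Fin 2) (j : ℕ) : ℕ :=
  part D c j + (m + s c) - j

/-- The multiset of entries of the row `β^(c)` of the `s`-symbol. -/
def rowM (s : Fin 2 → ℕ) (m : ℕ) (D : Finset Node) (c : Fin 2) : Multiset ℕ :=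
  (Finset.Icc 1 (m + s c)).val.map (beta s m D c)

/-- The list of the values `θ(β⁽⁰⁾_{m+s₀}), θ(β⁽⁰⁾_{m+s₀-1}), …` chosen greedily:
at step `k` (handling `p = m + s₀ - k`) we choose the largest entry of the top row not yet
used that is `≤ β⁽⁰⁾_p`. -/
def thetaList (s : Fin 2 → ℕ) (m : ℕ) (D : Finset Node) : ℕ → List ℕ
  | 0 => []
  | k + 1 =>
      let prev := thetaList s m D k
      prev ++ [((((Finset.Icc 1 (m + s 1)).image (beta s m D 1)).filter
          (fun y => y ∉ prev ∧ y ≤ beta s m D 0 (m + s 0 - k))).max.unbotD 0)]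

/-- The greedy injection `θ`, as a function of the index `p ∈ {1, …, m + s₀}`:
`theta s m D p = θ(β⁽⁰⁾_p)`. -/
def theta (s : Fin 2 → ℕ) (m : ℕ) (D : Finset Node) (p : ℕ) : ℕ :=
  (thetaList s m D (m + s 0)).getD (m + s 0 - p) 0

/-- The bottom row of the symbol obtained by exchanging the entries of every pair:
it is the multiset of the values `θ(β⁽⁰⁾_p)`. -/
def bottomRowNew (s : Fin 2 → ℕ) (m : ℕ) (D : Finset Node) : Multiset ℕ :=
  (Finset.Icc 1 (m + s 0)).val.map (theta s m D)

/-- The top row of the symbol obtained by exchanging the entries of every pair: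
all entries of both rows that did not go to the new bottom row. -/
def topRowNew (s : Fin 2 → ℕ) (m : ℕ) (D : Finset Node) : Multiset ℕ :=
  (rowM s m D 0 + rowM s m D 1) - bottomRowNew s m D

/-- The rows of the symbol of `Υ(λ)`. -/
def newRow (s : Fin 2 → ℕ) (m : ℕ) (D : Finset Node) (c : Fin 2) : Multiset ℕ :=
  if c = 0 then bottomRowNew s m D else topRowNew s m D

/-- The `j`-th largest entry of a multiset of naturals (`j ≥ 1`). -/
def rowEntry (B : Multiset ℕ) (j : ℕ) : ℕ :=
  (B.sort (· ≤ ·)).getD (Multiset.card B - j) 0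

/-- The `j`-th part of the partition encoded by a multiset of `card B` distinct
beta-numbers: `λ_j = (j-th largest entry) + j - card B`. -/
def rowPart (B : Multiset ℕ) (j : ℕ) : ℕ :=
  if 1 ≤ j ∧ j ≤ Multiset.card B then rowEntry B j + j - Multiset.card B else 0

/-- The Young diagram of the bipartition with parts `p`, within the box of size `N`. -/
def toDiagram (p : Fin 2 → ℕ → ℕ) (N : ℕ) : Finset Node :=
  ((Finset.Icc 1 N) ×ˢ (Finset.Icc 1 N) ×ˢ (Finset.univ : Finset (Fin 2))).filter
    (fun γ => γ.2.1 ≤ p γ.2.2 γ.1)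

/-- The map `Υ_{(s₀,s₁)}`: exchange the two entries of every pair of the `s`-symbol and
reorder the rows; `Upsilon s m D` is the diagram of the resulting bipartition. -/
def Upsilon (s : Fin 2 → ℕ) (m : ℕ) (D : Finset Node) : Finset Node :=
  toDiagram (fun c j => rowPart (newRow s m D c) j) D.card

/-- The list of values `τ(α⁽⁰⁾_1), τ(α⁽⁰⁾_2), …` chosen greedily: at step `k + 1`
(handling `p = k + 1`) we choose the smallest entry of the top row `Top` not yet used
that is `≥ b (k+1)`, where `b p` is the `p`-th entry of the bottom row. -/
def tauList (Top : Finset ℕ) (b : ℕ → ℕ) : ℕ → List ℕ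
  | 0 => []
  | k + 1 =>
      let prev := tauList Top b k
      prev ++ [((Top.filter (fun y => y ∉ prev ∧ b (k + 1) ≤ y)).min.untopD 0)]

/-- The greedy injection `τ`, as a function of the index `p ∈ {1, …, P}`. -/
def tau (Top : Finset ℕ) (b : ℕ → ℕ) (P : ℕ) (p : ℕ) : ℕ :=
  (tauList Top b P).getD (p - 1) 0

end UglovPaper
namespace UglovPaper

/-! ### Auxiliary lemmas for Statement 8 -/

lemma node_ext {x y : Node} (h1 : nrow x = nrow y) (h2 : ncol x = ncol y)
    (h3 : ncomp x = ncomp y) : x = y := by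
  obtain ⟨a, b, c⟩ := x; obtain ⟨a', b', c'⟩ := y
  simp only [nrow, ncol, ncomp] at h1 h2 h3
  simp [h1, h2, h3]

lemma mem_diagram_iff {D : Finset Node} (hD : IsDiagram D) {a b : ℕ} {c : Fin 2} :
    (a, b, c) ∈ D ↔ 1 ≤ a ∧ 1 ≤ b ∧ b ≤ part D c a := by
  obtain ⟨h1, h2, h3⟩ := hD
  constructor
  · intro hm
    obtain ⟨ha, hb⟩ := h1 _ hm
    simp only [nrow, ncol] at ha hb
    refine ⟨ha, hb, ?_⟩
    have hcard : (Finset.Icc 1 b).card ≤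
        (D.filter (fun γ => nrow γ = a ∧ ncomp γ = c)).card := by
      apply Finset.card_le_card_of_injOn (fun b' => (a, b', c))
      · intro b' hb'
        rw [Finset.mem_coe, Finset.mem_Icc] at hb'
        rw [Finset.mem_coe, Finset.mem_filter]
        exact ⟨h2 _ hm b' hb'.1 hb'.2, rfl, rfl⟩
      · intro x _ y _ hxy
        simpa using congrArg (fun z : Node => z.2.1) hxy
    simpa [part] using hcard
  · rintro ⟨ha, hb, hbp⟩
    have hpart : part D c a = (D.filter (fun γ => nrow γ = a ∧ ncomp γ = c)).card := rfl
    have hex : ∃ x ∈ D.filter (fun γ => nrow γ = a ∧ ncomp γ = c), b ≤ ncol x := by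
      by_contra hno
      push_neg at hno
      have hle : (D.filter (fun γ => nrow γ = a ∧ ncomp γ = c)).card ≤
          (Finset.Icc 1 (b - 1)).card := by
        apply Finset.card_le_card_of_injOn ncol
        · intro x hx
          rw [Finset.mem_coe, Finset.mem_Icc]
          have h1x := h1 x (Finset.mem_filter.mp hx).1
          have hlt := hno x hx
          omega
        · intro x hx y hy hxy
          rw [Finset.mem_coe, Finset.mem_filter] at hx hy
          exact node_ext (hx.2.1.trans hy.2.1.symm) hxy (hx.2.2.trans hy.2.2.symm)
      rw [Nat.card_Icc] at hle
      omega
    obtain ⟨x, hx, hbx⟩ := hex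
    rw [Finset.mem_filter] at hx
    have hmem := h2 x hx.1 b hb hbx
    rwa [hx.2.1, hx.2.2] at hmem

lemma part_succ_le {D : Finset Node} (hD : IsDiagram D) {a : ℕ} (ha : 1 ≤ a) (c : Fin 2) :
    part D c (a + 1) ≤ part D c a := by
  rcases Nat.eq_zero_or_pos (part D c (a + 1)) with h | h
  · omega
  · have hm : (a + 1, part D c (a + 1), c) ∈ D :=
      (mem_diagram_iff hD).mpr ⟨by omega, h, le_rfl⟩
    have h3 := hD.2.2 _ hm (by simp only [nrow]; omega)
    simp only [nrow, ncol, ncomp, Nat.add_sub_cancel] at h3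
    exact ((mem_diagram_iff hD).mp h3).2.2

lemma part_erase_le {D : Finset Node} {γ : Node} {a : ℕ} {c : Fin 2} :
    part (D.erase γ) c a ≤ part D c a :=
  Finset.card_le_card (Finset.filter_subset_filter _ (Finset.erase_subset _ _))

lemma part_erase_eq {D : Finset Node} {γ : Node} {a : ℕ} {c : Fin 2}
    (h : ¬(nrow γ = a ∧ ncomp γ = c)) :
    part (D.erase γ) c a = part D c a := by
  unfold part
  rw [Finset.filter_erase, Finset.erase_eq_of_notMem]
  simp only [Finset.mem_filter]
  tauto

lemma part_erase_succ {D : Finset Node} {γ : Node} {a : ℕ} {c : Fin 2}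
    (hγ : γ ∈ D) (hr : nrow γ = a) (hc : ncomp γ = c) :
    part D c a = part (D.erase γ) c a + 1 := by
  subst hr hc
  unfold part
  rw [Finset.filter_erase,
    Finset.card_erase_of_mem (by simp [Finset.mem_filter, hγ])]
  have hpos : 0 < (D.filter
      (fun x => nrow x = nrow γ ∧ ncomp x = ncomp γ)).card :=
    Finset.card_pos.mpr ⟨γ, by simp [Finset.mem_filter, hγ]⟩
  omega

lemma removable_ncol {D : Finset Node} (hD : IsDiagram D) {a b : ℕ} {c : Fin 2}
    (hrem : Removable D (a, b, c)) : b = part D c a := by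
  obtain ⟨hmem, hD'⟩ := hrem
  obtain ⟨ha, hb, hbp⟩ := (mem_diagram_iff hD).mp hmem
  by_contra hne
  have h2 : (a, b + 1, c) ∈ D := (mem_diagram_iff hD).mpr ⟨ha, by omega, by omega⟩
  have h2' : (a, b + 1, c) ∈ D.erase (a, b, c) :=
    Finset.mem_erase.mpr ⟨by simp, h2⟩
  have h3 := hD'.2.1 _ h2' b hb (by simp only [ncol]; omega)
  simp only [nrow, ncol, ncomp] at h3
  exact (Finset.mem_erase.mp h3).1 rfl

lemma addable_end {D : Finset Node} (hD : IsDiagram D) {a : ℕ} (ha : 1 ≤ a) (c : Fin 2)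
    (hgt : 2 ≤ a → part D c a + 1 ≤ part D c (a - 1)) :
    Addable D (a, part D c a + 1, c) := by
  constructor
  · intro hmem
    have := (mem_diagram_iff hD).mp hmem
    omega
  · refine ⟨?_, ?_, ?_⟩
    · intro x hx
      rcases Finset.mem_insert.mp hx with h | h
      · subst h
        refine ⟨?_, ?_⟩ <;> simp only [nrow, ncol] <;> omega
      · exact hD.1 x h
    · intro x hx b' hb1 hb2
      rcases Finset.mem_insert.mp hx with h | h
      · subst h
        simp only [nrow, ncol, ncomp] at hb2 ⊢
        rcases Nat.lt_or_ge b' (part D c a + 1) with hlt | hge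
        · exact Finset.mem_insert_of_mem
            ((mem_diagram_iff hD).mpr ⟨ha, hb1, by omega⟩)
        · have hb' : b' = part D c a + 1 := by omega
          subst hb'
          exact Finset.mem_insert_self _ _
      · exact Finset.mem_insert_of_mem (hD.2.1 x h b' hb1 hb2)
    · intro x hx h2
      rcases Finset.mem_insert.mp hx with h | h
      · subst h
        simp only [nrow, ncol, ncomp] at h2 ⊢
        exact Finset.mem_insert_of_mem
          ((mem_diagram_iff hD).mpr ⟨by omega, by omega, hgt h2⟩)
      · exact Finset.mem_insert_of_mem (hD.2.2 x h h2)

/-- every `λ ∈ Φ_{e,n}^{(s₀,s₁)}` with `s₀ ≤ s₁` satisfies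
`λ⁽⁰⁾_i ≥ λ⁽¹⁾_{i+s₁-s₀}` for all `i ≥ 1`. -/
theorem uglovSet_dominance (e : ℕ) (he : 1 < e) (s₀ s₁ : ℕ) (hs : s₀ ≤ s₁) (n : ℕ)
    (D : Finset Node) (h : UglovSet e ![(s₀ : ℤ), (s₁ : ℤ)] n D) :
    ∀ i : ℕ, 1 ≤ i → part D 1 (i + (s₁ - s₀)) ≤ part D 0 i := by
  have h' : CrystalSet (chargeLT ![(s₀ : ℤ), (s₁ : ℤ)]) (res e ![(s₀ : ℤ), (s₁ : ℤ)]) n D := h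
  clear h
  induction h' with
  | empty => intro i _; simp [part]
  | @step m D γ i hdiag hgood hprev ih =>
    intro j hj
    obtain ⟨ga, gb, gc⟩ := γ
    by_cases hc : ga = j + (s₁ - s₀) ∧ gc = 1
    · -- the removed node is in component 1, row j + (s₁ - s₀)
      obtain ⟨hga, hgc⟩ := hc
      subst hga hgc
      have hnorm := hgood.1
      have hrem : Removable D (j + (s₁ - s₀), gb, 1) := hnorm.1
      have hmemD := hrem.1
      by_contra hlt
      push_neg at hlt
      have he0 : part (D.erase (j + (s₁ - s₀), gb, 1)) 0 j = part D 0 j :=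
        part_erase_eq (by simp [ncomp])
      have he1 : part D 1 (j + (s₁ - s₀)) =
          part (D.erase (j + (s₁ - s₀), gb, 1)) 1 (j + (s₁ - s₀)) + 1 :=
        part_erase_succ hmemD rfl rfl
      have hIH := ih j hj
      have heq : part D 1 (j + (s₁ - s₀)) = part D 0 j + 1 := by omega
      have hgb : gb = part D 0 j + 1 := by
        have := removable_ncol hdiag hrem
        omega
      subst hgb
      -- the candidate addable node in component 0
      have hgt : 2 ≤ j → part D 0 j + 1 ≤ part D 0 (j - 1) := by
        intro hj2
        have hsum : j - 1 + (s₁ - s₀) + 1 = j + (s₁ - s₀) := by omega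
        have hmono : part D 1 (j + (s₁ - s₀)) ≤ part D 1 (j - 1 + (s₁ - s₀)) := by
          rw [← hsum]
          exact part_succ_le hdiag (by omega) 1
        have hIH' := ih (j - 1) (by omega)
        have he1' : part (D.erase (j + (s₁ - s₀), part D 0 j + 1, 1)) 1
            (j - 1 + (s₁ - s₀)) = part D 1 (j - 1 + (s₁ - s₀)) :=
          part_erase_eq (by simp only [nrow, ncomp]; omega)
        have he0' : part (D.erase (j + (s₁ - s₀), part D 0 j + 1, 1)) 0 (j - 1) ≤
            part D 0 (j - 1) := part_erase_le
        omega
      have hadd : Addable D (j, part D 0 j + 1, 0) := addable_end hdiag hj 0 hgt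
      -- contents agree
      have hcont : cont ![(s₀ : ℤ), (s₁ : ℤ)] (j + (s₁ - s₀), part D 0 j + 1, 1) =
          cont ![(s₀ : ℤ), (s₁ : ℤ)] (j, part D 0 j + 1, 0) := by
        simp only [cont, nrow, ncol, ncomp, Matrix.cons_val_one, Matrix.head_cons,
          Matrix.cons_val_zero]
        push_cast [Nat.cast_sub hs]
        ring
      have hres : res e ![(s₀ : ℤ), (s₁ : ℤ)] (j, part D 0 j + 1, 0) = i := by
        have : res e ![(s₀ : ℤ), (s₁ : ℤ)] (j, part D 0 j + 1, 0) =
            res e ![(s₀ : ℤ), (s₁ : ℤ)] (j + (s₁ - s₀), part D 0 j + 1, 1) := by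
          unfold res
          rw [hcont]
        rw [this]
        exact hnorm.2.1
      have hltγη : chargeLT ![(s₀ : ℤ), (s₁ : ℤ)] (j + (s₁ - s₀), part D 0 j + 1, 1)
          (j, part D 0 j + 1, 0) := by
        right
        refine ⟨hcont, ?_⟩
        show (0 : Fin 2) < 1
        decide
      have hkey := hnorm.2.2 (j, part D 0 j + 1, 0) hres hltγη
      -- the interval contains exactly one addable node and no removable node
      have horder : ∀ x : Node,
          chargeLT ![(s₀ : ℤ), (s₁ : ℤ)] (j + (s₁ - s₀), part D 0 j + 1, 1) x →
          (chargeLT ![(s₀ : ℤ), (s₁ : ℤ)] x (j, part D 0 j + 1, 0) ∨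
            x = (j, part D 0 j + 1, 0)) → x = (j, part D 0 j + 1, 0) := by
        intro x hgx hxη
        rcases hxη with hxη | rfl
        · exfalso
          rcases hgx with h1 | ⟨h1, h1'⟩ <;> rcases hxη with h2 | ⟨h2, h2'⟩
          · rw [hcont] at h1; exact absurd (h1.trans h2) (lt_irrefl _)
          · rw [hcont, h2] at h1; exact absurd h1 (lt_irrefl _)
          · rw [← h1, hcont] at h2; exact absurd h2 (lt_irrefl _)
          · simp only [ncomp, Fin.lt_def, Fin.val_one, Fin.val_zero] at h1' h2'
            omega
        · rfl
      have hA : {x : Node | Addable D x ∧ res e ![(s₀ : ℤ), (s₁ : ℤ)] x = i ∧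
          chargeLT ![(s₀ : ℤ), (s₁ : ℤ)] (j + (s₁ - s₀), part D 0 j + 1, 1) x ∧
          (chargeLT ![(s₀ : ℤ), (s₁ : ℤ)] x (j, part D 0 j + 1, 0) ∨
            x = (j, part D 0 j + 1, 0))} = {(j, part D 0 j + 1, 0)} := by
        apply Set.eq_singleton_iff_unique_mem.mpr
        refine ⟨⟨hadd, hres, hltγη, Or.inr rfl⟩, ?_⟩
        rintro x ⟨-, -, hgx, hxη⟩
        exact horder x hgx hxη
      have hR : {x : Node | Removable D x ∧ res e ![(s₀ : ℤ), (s₁ : ℤ)] x = i ∧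
          chargeLT ![(s₀ : ℤ), (s₁ : ℤ)] (j + (s₁ - s₀), part D 0 j + 1, 1) x ∧
          (chargeLT ![(s₀ : ℤ), (s₁ : ℤ)] x (j, part D 0 j + 1, 0) ∨
            x = (j, part D 0 j + 1, 0))} = ∅ := by
        ext x
        simp only [Set.mem_setOf_eq, Set.mem_empty_iff_false, iff_false]
        rintro ⟨hxrem, -, hgx, hxη⟩
        have hx := horder x hgx hxη
        subst hx
        exact hadd.1 hxrem.1
      rw [hA, hR] at hkey
      simp [Set.ncard_singleton, Set.ncard_empty] at hkey
    · -- the removed node does not affect the inequality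
      have h1 : part D 1 (j + (s₁ - s₀)) = part (D.erase (ga, gb, gc)) 1 (j + (s₁ - s₀)) :=
        (part_erase_eq (by simpa only [nrow, ncomp] using hc)).symm
      calc part D 1 (j + (s₁ - s₀))
          = part (D.erase (ga, gb, gc)) 1 (j + (s₁ - s₀)) := h1
        _ ≤ part (D.erase (ga, gb, gc)) 0 j := ih j hj
        _ ≤ part D 0 j := part_erase_le

end UglovPaper
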